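/- arXiv:1005.3144 — 6 statements merged into one kernel-verified Lean document; each statement's English description precedes it below -/
import Mathlib

section
/- Let a, l, u ∈ ℝⁿ with l ≤ u componentwise, b ∈ ℝ, and y ∈ ℝⁿ, and suppose the equality knapsack set D_E = {x ∈ ℝⁿ : l ≤ x ≤ u, aᵀx = b} is nonempty. Then the problem min_{x ∈ D_E} ½‖x − y‖₂² has a unique solution x*, and there exists λ* ∈ ℝ such that h(λ*) = 0 and x* = mid(l, y − λ*·a, u), where h(λ) = b − Σᵢ aᵢ·mid(lᵢ, yᵢ − λ·aᵢ, uᵢ). -/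
private lemma mid_key (ℓ υ v z : ℝ) (hlu : ℓ ≤ υ) (h1 : ℓ ≤ z) (h2 : z ≤ υ) :
    0 ≤ (max ℓ (min v υ) - v) * (z - max ℓ (min v υ)) := by
  rcases le_total v ℓ with hv | hv
  · have hm : max ℓ (min v υ) = ℓ := by
      rw [min_eq_left (hv.trans hlu), max_eq_left hv]
    rw [hm]; nlinarith
  · rcases le_total υ v with hv2 | hv2
    · have hm : max ℓ (min v υ) = υ := by rw [min_eq_right hv2, max_eq_right hlu]
      rw [hm]; nlinarith
    · have hm : max ℓ (min v υ) = v := by rw [min_eq_left hv2, max_eq_right hv]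
      rw [hm]; simp

/-- Projection onto the equality knapsack set: if
`D_E = {x : l ≤ x ≤ u componentwise, aᵀx = b}` is nonempty, then
`min_{x ∈ D_E} ½‖x − y‖₂²` has a unique solution `x*`, and there exists `λ*`
with `h(λ*) = 0` and `x* = mid(l, y − λ*·a, u)`, where
`h(λ) = b − Σᵢ aᵢ·mid(lᵢ, yᵢ − λ·aᵢ, uᵢ)` and `mid(ℓ, v, υ) = max ℓ (min v υ)`. -/
theorem knapsack_equality_projection (n : ℕ) (a l u y : Fin n → ℝ) (b : ℝ)
    (hlu : ∀ i, l i ≤ u i)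
    (hne : ∃ x : Fin n → ℝ, (∀ i, l i ≤ x i ∧ x i ≤ u i) ∧ ∑ i, a i * x i = b) :
    ∃ xstar : Fin n → ℝ,
      ((∀ i, l i ≤ xstar i ∧ xstar i ≤ u i) ∧ ∑ i, a i * xstar i = b) ∧
      (∀ z : Fin n → ℝ, ((∀ i, l i ≤ z i ∧ z i ≤ u i) ∧ ∑ i, a i * z i = b) →
        (1 / 2) * ∑ i, (xstar i - y i) ^ 2 ≤ (1 / 2) * ∑ i, (z i - y i) ^ 2) ∧
      (∀ x' : Fin n → ℝ,
        (((∀ i, l i ≤ x' i ∧ x' i ≤ u i) ∧ ∑ i, a i * x' i = b) ∧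
          ∀ z : Fin n → ℝ, ((∀ i, l i ≤ z i ∧ z i ≤ u i) ∧ ∑ i, a i * z i = b) →
            (1 / 2) * ∑ i, (x' i - y i) ^ 2 ≤ (1 / 2) * ∑ i, (z i - y i) ^ 2) →
        x' = xstar) ∧
      ∃ lam : ℝ,
        b - ∑ i, a i * max (l i) (min (y i - lam * a i) (u i)) = 0 ∧
        xstar = fun i => max (l i) (min (y i - lam * a i) (u i)) := by
  obtain ⟨x0, hx0box, hx0sum⟩ := hne
  set hfun : ℝ → ℝ := fun t => b - ∑ i, a i * max (l i) (min (y i - t * a i) (u i)) with hfdef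
  -- thresholds
  obtain ⟨B0, hB0⟩ := Finite.exists_le (fun i : Fin n =>
    if 0 < a i then (y i - l i) / a i else if a i < 0 then (y i - u i) / a i else 0)
  obtain ⟨A1, hA1⟩ := Finite.exists_le (fun i : Fin n =>
    -(if 0 < a i then (y i - u i) / a i else if a i < 0 then (y i - l i) / a i else 0))
  set A : ℝ := min (-A1) B0 with hAdef
  set B : ℝ := max (-A1) B0 with hBdef
  have hAB : A ≤ B := min_le_max
  -- hfun B ≥ 0
  have hB : 0 ≤ hfun B := by
    have hterm : ∀ i, a i * max (l i) (min (y i - B * a i) (u i)) ≤ a i * x0 i := by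
      intro i
      rcases lt_trichotomy (a i) 0 with hai | hai | hai
      · have hfi := hB0 i
        simp only [if_neg (not_lt.mpr hai.le), if_pos hai] at hfi
        have hBle : B0 ≤ B := le_max_right _ _
        have : (y i - u i) / a i ≤ B := le_trans hfi hBle
        have hyu : y i - u i ≥ B * a i := by
          rw [div_le_iff_of_neg hai] at this; linarith
        have hm : max (l i) (min (y i - B * a i) (u i)) = u i := by
          rw [min_eq_right (by linarith), max_eq_right (hlu i)]
        rw [hm]
        exact mul_le_mul_of_nonpos_left (hx0box i).2 hai.le
      · simp [hai]
      · have hfi := hB0 i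
        simp only [if_pos hai] at hfi
        have hBle : B0 ≤ B := le_max_right _ _
        have : (y i - l i) / a i ≤ B := le_trans hfi hBle
        have hyl : y i - l i ≤ B * a i := by
          rw [div_le_iff₀ hai] at this; linarith
        have hm : max (l i) (min (y i - B * a i) (u i)) = l i := by
          have h1 : y i - B * a i ≤ l i := by linarith
          rw [min_eq_left (h1.trans (hlu i)), max_eq_left h1]
        rw [hm]
        exact mul_le_mul_of_nonneg_left (hx0box i).1 hai.le
    have hss : ∑ i, a i * max (l i) (min (y i - B * a i) (u i)) ≤ ∑ i, a i * x0 i :=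
      Finset.sum_le_sum (fun i _ => hterm i)
    simp only [hfdef]
    rw [hx0sum] at hss
    linarith
  -- hfun A ≤ 0
  have hA : hfun A ≤ 0 := by
    have hterm : ∀ i, a i * x0 i ≤ a i * max (l i) (min (y i - A * a i) (u i)) := by
      intro i
      rcases lt_trichotomy (a i) 0 with hai | hai | hai
      · have hfi := hA1 i
        simp only [if_neg (not_lt.mpr hai.le), if_pos hai] at hfi
        have hAle : A ≤ -A1 := min_le_left _ _
        have hle : A ≤ (y i - l i) / a i := by
          have : -A1 ≤ (y i - l i) / a i := by linarith
          linarith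
        have hyl : y i - l i ≤ A * a i := by
          rw [le_div_iff_of_neg hai] at hle; linarith
        have hm : max (l i) (min (y i - A * a i) (u i)) = l i := by
          have h1 : y i - A * a i ≤ l i := by linarith
          rw [min_eq_left (h1.trans (hlu i)), max_eq_left h1]
        rw [hm]
        exact mul_le_mul_of_nonpos_left (hx0box i).1 hai.le
      · simp [hai]
      · have hfi := hA1 i
        simp only [if_pos hai] at hfi
        have hAle : A ≤ -A1 := min_le_left _ _
        have : A ≤ (y i - u i) / a i := by
          have : -A1 ≤ (y i - u i) / a i := by linarith
          linarith
        have hyu : A * a i ≤ y i - u i := by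
          rw [le_div_iff₀ hai] at this; linarith
        have hm : max (l i) (min (y i - A * a i) (u i)) = u i := by
          rw [min_eq_right (by linarith), max_eq_right (hlu i)]
        rw [hm]
        exact mul_le_mul_of_nonneg_left (hx0box i).2 hai.le
    have hss : ∑ i, a i * x0 i ≤ ∑ i, a i * max (l i) (min (y i - A * a i) (u i)) :=
      Finset.sum_le_sum (fun i _ => hterm i)
    simp only [hfdef]
    rw [hx0sum] at hss
    linarith
  -- continuity
  have hc : Continuous hfun := by
    apply continuous_const.sub
    apply continuous_finset_sum
    intro i _
    apply continuous_const.mul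
    exact Continuous.max continuous_const
      (Continuous.min ((continuous_const.sub (continuous_id.mul continuous_const))) continuous_const)
  -- IVT
  have hmem : (0 : ℝ) ∈ Set.Icc (hfun A) (hfun B) := ⟨hA, hB⟩
  obtain ⟨lam, _, hlam⟩ := intermediate_value_Icc hAB hc.continuousOn hmem
  set xstar : Fin n → ℝ := fun i => max (l i) (min (y i - lam * a i) (u i)) with hxdef
  have hbox : ∀ i, l i ≤ xstar i ∧ xstar i ≤ u i := by
    intro i
    exact ⟨le_max_left _ _, max_le (hlu i) (min_le_right _ _)⟩
  have hsum : ∑ i, a i * xstar i = b := by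
    have : hfun lam = 0 := hlam
    simp only [hfdef] at this
    linarith
  -- key minimality estimate
  have hmin : ∀ z : Fin n → ℝ, ((∀ i, l i ≤ z i ∧ z i ≤ u i) ∧ ∑ i, a i * z i = b) →
      ∑ i, (xstar i - y i) ^ 2 + ∑ i, (z i - xstar i) ^ 2 ≤ ∑ i, (z i - y i) ^ 2 := by
    intro z ⟨hzbox, hzsum⟩
    have h1 : 0 ≤ ∑ i, (xstar i - (y i - lam * a i)) * (z i - xstar i) :=
      Finset.sum_nonneg fun i _ =>
        mid_key (l i) (u i) (y i - lam * a i) (z i) (hlu i) (hzbox i).1 (hzbox i).2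
    have E2 : ∑ i, (z i - y i) ^ 2 =
        ∑ i, (xstar i - y i) ^ 2 + ∑ i, (z i - xstar i) ^ 2
          + 2 * ∑ i, (xstar i - (y i - lam * a i)) * (z i - xstar i)
          - 2 * lam * ∑ i, a i * z i + 2 * lam * ∑ i, a i * xstar i := by
      simp only [Finset.mul_sum, ← Finset.sum_add_distrib, ← Finset.sum_sub_distrib]
      exact Finset.sum_congr rfl fun i _ => by simp only [hxdef]; ring
    rw [hzsum, hsum] at E2
    linarith
  refine ⟨xstar, ⟨hbox, hsum⟩, ?_, ?_, lam, by simpa [hfdef] using hlam, rfl⟩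
  · intro z hz
    have h2 : 0 ≤ ∑ i, (z i - xstar i) ^ 2 := Finset.sum_nonneg fun i _ => sq_nonneg _
    have := hmin z hz
    linarith
  · intro x' ⟨hx'feas, hx'min⟩
    have h1 := hx'min xstar ⟨hbox, hsum⟩
    have h2 := hmin x' hx'feas
    have h3 : ∑ i, (x' i - xstar i) ^ 2 ≤ 0 := by linarith
    have h4 : ∑ i, (x' i - xstar i) ^ 2 = 0 :=
      le_antisymm h3 (Finset.sum_nonneg fun i _ => sq_nonneg _)
    funext i
    have h5 := (Finset.sum_eq_zero_iff_of_nonneg (fun i _ => sq_nonneg (x' i - xstar i))).mp h4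
      i (Finset.mem_univ i)
    have := pow_eq_zero_iff (n := 2) (by norm_num) |>.mp h5
    linarith [this]
end

section
/- Let a, l, u, y ∈ ℝⁿ with l ≤ u componentwise and b ∈ ℝ. The function h : ℝ → ℝ defined by h(λ) = b − Σᵢ aᵢ·mid(lᵢ, yᵢ − λ·aᵢ, uᵢ) is continuous and monotone (nondecreasing) on ℝ. -/
/-- The function `h(λ) = b − Σᵢ aᵢ·mid(lᵢ, yᵢ − λ·aᵢ, uᵢ)` (with
`mid(ℓ, v, υ) = max ℓ (min v υ)`) is continuous and monotone nondecreasing. -/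
theorem knapsack_h_continuous_monotone (n : ℕ) (a l u y : Fin n → ℝ) (b : ℝ)
    (hlu : ∀ i, l i ≤ u i) :
    Continuous (fun lam : ℝ =>
      b - ∑ i, a i * max (l i) (min (y i - lam * a i) (u i))) ∧
    Monotone (fun lam : ℝ =>
      b - ∑ i, a i * max (l i) (min (y i - lam * a i) (u i))) := by
  constructor
  · apply continuous_const.sub
    apply continuous_finset_sum
    intro i _
    exact continuous_const.mul (continuous_const.max ((continuous_const.sub (continuous_id.mul continuous_const)).min continuous_const))
  · intro s t hst
    dsimp only
    apply sub_le_sub_left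
    apply Finset.sum_le_sum
    intro i _
    rcases le_or_gt 0 (a i) with h | h
    · apply mul_le_mul_of_nonneg_left _ h
      exact max_le_max le_rfl (min_le_min (by nlinarith) le_rfl)
    · apply mul_le_mul_of_nonpos_left _ h.le
      exact max_le_max le_rfl (min_le_min (by nlinarith) le_rfl)
end

section
/- Let a, l, u, y ∈ ℝⁿ with l ≤ u componentwise, b ∈ ℝ, suppose aᵢ ≠ 0 for at least one index i, and suppose D_E = {x ∈ ℝⁿ : l ≤ x ≤ u, aᵀx = b} is nonempty. Define the breakpoints λᵢˡ = (yᵢ − lᵢ)/aᵢ and λᵢᵘ = (yᵢ − uᵢ)/aᵢ for indices i with aᵢ ≠ 0, and set λ_L = min and λ_R = max over all these breakpoints. Then h(λ) ≤ 0 for all λ ≤ λ_L, h(λ) ≥ 0 for all λ ≥ λ_R (in particular h(λ_L)·h(λ_R) ≤ 0), and there exists λ* ∈ [λ_L, λ_R] with h(λ*) = 0. -/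
/-- Bracketing of the root of `h(λ) = b − Σᵢ aᵢ·mid(lᵢ, yᵢ − λ·aᵢ, uᵢ)`:
with `λ_L` the least and `λ_R` the greatest of the breakpoints
`(yᵢ − lᵢ)/aᵢ`, `(yᵢ − uᵢ)/aᵢ` (over indices with `aᵢ ≠ 0`), if the equality
knapsack set is nonempty then `h ≤ 0` on `(-∞, λ_L]`, `h ≥ 0` on `[λ_R, ∞)`,
`h(λ_L)·h(λ_R) ≤ 0`, and `h` has a root in `[λ_L, λ_R]`. -/
theorem knapsack_root_bracket (n : ℕ) (a l u y : Fin n → ℝ) (b : ℝ)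
    (hlu : ∀ i, l i ≤ u i)
    (hA : ∃ i, a i ≠ 0)
    (hne : ∃ x : Fin n → ℝ, (∀ i, l i ≤ x i ∧ x i ≤ u i) ∧ ∑ i, a i * x i = b)
    (lamL lamR : ℝ)
    (hL : IsLeast
      {t : ℝ | ∃ i, a i ≠ 0 ∧ (t = (y i - l i) / a i ∨ t = (y i - u i) / a i)} lamL)
    (hR : IsGreatest
      {t : ℝ | ∃ i, a i ≠ 0 ∧ (t = (y i - l i) / a i ∨ t = (y i - u i) / a i)} lamR) :
    (∀ lam : ℝ, lam ≤ lamL →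
      b - ∑ i, a i * max (l i) (min (y i - lam * a i) (u i)) ≤ 0) ∧
    (∀ lam : ℝ, lamR ≤ lam →
      0 ≤ b - ∑ i, a i * max (l i) (min (y i - lam * a i) (u i))) ∧
    (b - ∑ i, a i * max (l i) (min (y i - lamL * a i) (u i))) *
      (b - ∑ i, a i * max (l i) (min (y i - lamR * a i) (u i))) ≤ 0 ∧
    ∃ lam ∈ Set.Icc lamL lamR,
      b - ∑ i, a i * max (l i) (min (y i - lam * a i) (u i)) = 0 := by
  obtain ⟨x, hx, hxb⟩ := hne
  set f : ℝ → ℝ := fun lam => b - ∑ i, a i * max (l i) (min (y i - lam * a i) (u i))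
    with hf
  have hleft : ∀ lam : ℝ, lam ≤ lamL → f lam ≤ 0 := by
    intro lam hlam
    have hsum : b ≤ ∑ i, a i * max (l i) (min (y i - lam * a i) (u i)) := by
      rw [← hxb]
      apply Finset.sum_le_sum
      intro i _
      rcases lt_trichotomy (a i) 0 with hpos | hz | hneg
      · -- a i < 0 : lamL ≤ (y i - l i)/a i, so y i - lam * a i ≤ l i
        have hmem : (y i - l i) / a i ∈ {t : ℝ | ∃ i, a i ≠ 0 ∧
            (t = (y i - l i) / a i ∨ t = (y i - u i) / a i)} := ⟨i, hpos.ne, Or.inl rfl⟩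
        have h1 : lam ≤ (y i - l i) / a i := le_trans hlam (hL.2 hmem)
        have h2 : y i - l i ≤ lam * a i := by
          rw [le_div_iff_of_neg hpos] at h1; linarith
        have h3 : y i - lam * a i ≤ l i := by linarith
        have hmin : min (y i - lam * a i) (u i) ≤ l i :=
          le_trans (min_le_left _ _) h3
        have hmax : max (l i) (min (y i - lam * a i) (u i)) = l i :=
          max_eq_left hmin
        rw [hmax]
        exact mul_le_mul_of_nonpos_left (hx i).1 hpos.le
      · simp [hz]
      · -- a i > 0 : lamL ≤ (y i - u i)/a i, so u i ≤ y i - lam * a i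
        have hmem : (y i - u i) / a i ∈ {t : ℝ | ∃ i, a i ≠ 0 ∧
            (t = (y i - l i) / a i ∨ t = (y i - u i) / a i)} := ⟨i, hneg.ne', Or.inr rfl⟩
        have h1 : lam ≤ (y i - u i) / a i := le_trans hlam (hL.2 hmem)
        have h2 : lam * a i ≤ y i - u i := by
          rw [le_div_iff₀ hneg] at h1; linarith
        have h3 : u i ≤ y i - lam * a i := by linarith
        have hmax : max (l i) (min (y i - lam * a i) (u i)) = u i := by
          rw [min_eq_right h3]; exact max_eq_right (hlu i)
        rw [hmax]
        exact mul_le_mul_of_nonneg_left (hx i).2 hneg.le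
    simpa [hf] using sub_nonpos.mpr hsum
  have hright : ∀ lam : ℝ, lamR ≤ lam → 0 ≤ f lam := by
    intro lam hlam
    have hsum : ∑ i, a i * max (l i) (min (y i - lam * a i) (u i)) ≤ b := by
      rw [← hxb]
      apply Finset.sum_le_sum
      intro i _
      rcases lt_trichotomy (a i) 0 with hpos | hz | hneg
      · -- a i < 0 : (y i - u i)/a i ≤ lamR ≤ lam, so u i ≤ y i - lam * a i
        have hmem : (y i - u i) / a i ∈ {t : ℝ | ∃ i, a i ≠ 0 ∧
            (t = (y i - l i) / a i ∨ t = (y i - u i) / a i)} := ⟨i, hpos.ne, Or.inr rfl⟩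
        have h1 : (y i - u i) / a i ≤ lam := le_trans (hR.2 hmem) hlam
        have h2 : lam * a i ≤ y i - u i := by
          rw [div_le_iff_of_neg hpos] at h1; linarith
        have h3 : u i ≤ y i - lam * a i := by linarith
        have hmax : max (l i) (min (y i - lam * a i) (u i)) = u i := by
          rw [min_eq_right h3]; exact max_eq_right (hlu i)
        rw [hmax]
        exact mul_le_mul_of_nonpos_left (hx i).2 hpos.le
      · simp [hz]
      · -- a i > 0 : (y i - l i)/a i ≤ lam, so y i - lam * a i ≤ l i
        have hmem : (y i - l i) / a i ∈ {t : ℝ | ∃ i, a i ≠ 0 ∧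
            (t = (y i - l i) / a i ∨ t = (y i - u i) / a i)} := ⟨i, hneg.ne', Or.inl rfl⟩
        have h1 : (y i - l i) / a i ≤ lam := le_trans (hR.2 hmem) hlam
        have h2 : y i - l i ≤ lam * a i := by
          rw [div_le_iff₀ hneg] at h1; linarith
        have h3 : y i - lam * a i ≤ l i := by linarith
        have hmax : max (l i) (min (y i - lam * a i) (u i)) = l i :=
          max_eq_left (le_trans (min_le_left _ _) h3)
        rw [hmax]
        exact mul_le_mul_of_nonneg_left (hx i).1 hneg.le
    simpa [hf] using sub_nonneg.mpr hsum
  have hLR : lamL ≤ lamR := hL.2 hR.1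
  have hcont : Continuous f := by
    apply Continuous.sub continuous_const
    apply continuous_finset_sum
    intro i _
    exact Continuous.mul continuous_const
      ((continuous_const.max ((continuous_const.sub
        (continuous_id.mul continuous_const)).min continuous_const)))
  have hfl : f lamL ≤ 0 := hleft lamL le_rfl
  have hfr : 0 ≤ f lamR := hright lamR le_rfl
  refine ⟨hleft, hright, mul_nonpos_of_nonpos_of_nonneg hfl hfr, ?_⟩
  have := intermediate_value_Icc hLR hcont.continuousOn
  obtain ⟨lam, hmem, hval⟩ := this ⟨hfl, hfr⟩
  exact ⟨lam, hmem, hval⟩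
end

section
/- Let a, l, u, y ∈ ℝⁿ with l ≤ u componentwise and aᵢ > 0 for every i, let b_l ≤ b_u in ℝ, and suppose the inequality knapsack set D_I = {x ∈ ℝⁿ : l ≤ x ≤ u, b_l ≤ aᵀx ≤ b_u} is nonempty. Let x_L* be the unique minimizer of ½‖x − y‖₂² over {x : l ≤ x ≤ u, aᵀx = b_l} and x_U* the unique minimizer of ½‖x − y‖₂² over {x : l ≤ x ≤ u, aᵀx = b_u}. Then the problem min_{x ∈ D_I} ½‖x − y‖₂² has a unique solution x*, and x* = mid(x_L*, y, x_U*). -/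
lemma sum_sq_expand' (n : ℕ) (x y z : Fin n → ℝ) :
    ∑ i, (z i - y i) ^ 2
      = ∑ i, (x i - y i) ^ 2 + 2 * ∑ i, (x i - y i) * (z i - x i)
        + ∑ i, (z i - x i) ^ 2 := by
  rw [Finset.mul_sum, ← Finset.sum_add_distrib, ← Finset.sum_add_distrib]
  exact Finset.sum_congr rfl fun i _ => by ring

lemma vi_of_min (n : ℕ) (a l u y x : Fin n → ℝ) (b : ℝ)
    (hfeas : (∀ i, l i ≤ x i ∧ x i ≤ u i) ∧ ∑ i, a i * x i = b)
    (hmin : ∀ z : Fin n → ℝ,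
      ((∀ i, l i ≤ z i ∧ z i ≤ u i) ∧ ∑ i, a i * z i = b) →
      (1 / 2) * ∑ i, (x i - y i) ^ 2 ≤ (1 / 2) * ∑ i, (z i - y i) ^ 2)
    (z : Fin n → ℝ)
    (hz : (∀ i, l i ≤ z i ∧ z i ≤ u i) ∧ ∑ i, a i * z i = b) :
    0 ≤ ∑ i, (x i - y i) * (z i - x i) := by
  by_contra hS
  push_neg at hS
  set S := ∑ i, (x i - y i) * (z i - x i) with hSdef
  set Q := ∑ i, (z i - x i) ^ 2 with hQdef
  have hQ0 : 0 ≤ Q := Finset.sum_nonneg fun i _ => sq_nonneg _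
  rcases eq_or_lt_of_le hQ0 with hQeq | hQpos
  · -- Q = 0 : z = x, so S = 0, contradiction
    have hzx : ∀ i ∈ Finset.univ, (z i - x i) ^ 2 = 0 := by
      rw [← Finset.sum_eq_zero_iff_of_nonneg (fun i _ => sq_nonneg _)]
      exact hQeq.symm
    have : S = 0 := Finset.sum_eq_zero fun i hi => by
      have := pow_eq_zero_iff (n := 2) (by norm_num) |>.1 (hzx i hi)
      simp [sub_eq_zero.mp this]
    linarith
  · set t : ℝ := min 1 (-S / Q) with htdef
    have ht0 : 0 < t := lt_min one_pos (div_pos (by linarith) hQpos)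
    have ht1 : t ≤ 1 := min_le_left _ _
    have htQ : t * Q ≤ -S := by
      have h2 : t ≤ -S / Q := min_le_right _ _
      rw [le_div_iff₀ hQpos] at h2
      linarith
    set w : Fin n → ℝ := fun i => x i + t * (z i - x i) with hwdef
    have hwfeas : (∀ i, l i ≤ w i ∧ w i ≤ u i) ∧ ∑ i, a i * w i = b := by
      constructor
      · intro i
        have h1 := (hfeas.1 i).1
        have h2 := (hfeas.1 i).2
        have h3 := (hz.1 i).1
        have h4 := (hz.1 i).2
        constructor
        · have : 0 ≤ (1 - t) * (x i - l i) + t * (z i - l i) :=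
            add_nonneg (mul_nonneg (by linarith) (by linarith))
              (mul_nonneg ht0.le (by linarith))
          simp only [hwdef]; nlinarith
        · have : 0 ≤ (1 - t) * (u i - x i) + t * (u i - z i) :=
            add_nonneg (mul_nonneg (by linarith) (by linarith))
              (mul_nonneg ht0.le (by linarith))
          simp only [hwdef]; nlinarith
      · have : ∑ i, a i * w i
            = ∑ i, a i * x i + (t * ∑ i, a i * z i - t * ∑ i, a i * x i) := by
          rw [Finset.mul_sum, Finset.mul_sum, ← Finset.sum_sub_distrib,
            ← Finset.sum_add_distrib]
          exact Finset.sum_congr rfl fun i _ => by simp only [hwdef]; ring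
        rw [this, hfeas.2, hz.2]; ring
    have hexp := sum_sq_expand' n x y w
    have h1 : ∑ i, (x i - y i) * (w i - x i) = t * S := by
      rw [hSdef, Finset.mul_sum]
      exact Finset.sum_congr rfl fun i _ => by simp only [hwdef]; ring
    have h2 : ∑ i, (w i - x i) ^ 2 = t ^ 2 * Q := by
      rw [hQdef, Finset.mul_sum]
      exact Finset.sum_congr rfl fun i _ => by simp only [hwdef]; ring
    have hm := hmin w hwfeas
    rw [hexp, h1, h2] at hm
    nlinarith [mul_pos ht0 hQpos]

lemma exists_mult (n : ℕ) (a l u y x : Fin n → ℝ) (b : ℝ)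
    (ha : ∀ i, 0 < a i)
    (hfeas : (∀ i, l i ≤ x i ∧ x i ≤ u i) ∧ ∑ i, a i * x i = b)
    (hmin : ∀ z : Fin n → ℝ,
      ((∀ i, l i ≤ z i ∧ z i ≤ u i) ∧ ∑ i, a i * z i = b) →
      (1 / 2) * ∑ i, (x i - y i) ^ 2 ≤ (1 / 2) * ∑ i, (z i - y i) ^ 2) :
    ∃ lam : ℝ, ∀ i, x i = max (l i) (min (y i + lam * a i) (u i)) := by
  -- exchange inequality
  have exch : ∀ i j, x i < u i → l j < x j →
      (x j - y j) / a j ≤ (x i - y i) / a i := by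
    intro i j hi hj
    by_cases hij : i = j
    · subst hij; exact le_refl _
    · set ε : ℝ := min (a i * (u i - x i)) (a j * (x j - l j)) with hεdef
      have hε : 0 < ε := lt_min (mul_pos (ha i) (by linarith))
        (mul_pos (ha j) (by linarith))
      set z : Fin n → ℝ := fun k =>
        x k + (if k = i then ε / a i else 0) - (if k = j then ε / a j else 0)
        with hzdef
      have hzi : z i = x i + ε / a i := by simp [hzdef, hij]
      have hzj : z j = x j - ε / a j := by
        simp only [hzdef]
        rw [if_neg (fun h => hij h.symm)]
        simp
      have hzk : ∀ k, k ≠ i → k ≠ j → z k = x k := by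
        intro k h1 h2; simp [hzdef, h1, h2]
      have haine : a i ≠ 0 := (ha i).ne'
      have hajne : a j ≠ 0 := (ha j).ne'
      have hzfeas : (∀ k, l k ≤ z k ∧ z k ≤ u k) ∧ ∑ k, a k * z k = b := by
        constructor
        · intro k
          by_cases h1 : k = i
          · subst h1
            rw [hzi]
            constructor
            · have : 0 ≤ ε / a k := le_of_lt (div_pos hε (ha k))
              linarith [(hfeas.1 k).1]
            · have h3 : ε ≤ a k * (u k - x k) := min_le_left _ _
              have h4 : ε / a k ≤ u k - x k :=
                (div_le_iff₀ (ha k)).2 (by linarith [mul_comm (a k) (u k - x k)])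
              linarith
          · by_cases h2 : k = j
            · subst h2
              rw [hzj]
              constructor
              · have h3 : ε ≤ a k * (x k - l k) := min_le_right _ _
                have : ε / a k ≤ x k - l k := (div_le_iff₀ (ha k)).2 (by linarith)
                linarith
              · have : 0 ≤ ε / a k := le_of_lt (div_pos hε (ha k))
                linarith [(hfeas.1 k).2]
            · rw [hzk k h1 h2]; exact hfeas.1 k
        · have step : ∀ k, a k * z k = a k * x k
              + (if k = i then ε else 0) - (if k = j then ε else 0) := by
            intro k
            by_cases h1 : k = i
            · subst h1
              rw [hzi, if_pos rfl, if_neg hij]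
              field_simp
              ring
            · by_cases h2 : k = j
              · subst h2
                rw [hzj, if_neg h1, if_pos rfl]
                field_simp
                ring
              · rw [hzk k h1 h2, if_neg h1, if_neg h2]; ring
          calc ∑ k, a k * z k
              = ∑ k, (a k * x k + (if k = i then ε else 0)
                  - (if k = j then ε else 0)) :=
                Finset.sum_congr rfl fun k _ => step k
            _ = b := by
                rw [Finset.sum_sub_distrib, Finset.sum_add_distrib, hfeas.2]
                simp
      have hvi := vi_of_min n a l u y x b hfeas hmin z hzfeas
      have hvisum : ∑ k, (x k - y k) * (z k - x k)
          = (x i - y i) * (ε / a i) - (x j - y j) * (ε / a j) := by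
        have step : ∀ k, (x k - y k) * (z k - x k)
            = (if k = i then (x i - y i) * (ε / a i) else 0)
              - (if k = j then (x j - y j) * (ε / a j) else 0) := by
          intro k
          by_cases h1 : k = i
          · subst h1; rw [hzi, if_pos rfl, if_neg hij]; ring
          · by_cases h2 : k = j
            · subst h2; rw [hzj, if_neg h1, if_pos rfl]; ring
            · rw [hzk k h1 h2, if_neg h1, if_neg h2]; ring
        rw [Finset.sum_congr rfl fun k _ => step k, Finset.sum_sub_distrib]
        simp
      rw [hvisum] at hvi
      have e1 : (x i - y i) * (ε / a i) = (x i - y i) / a i * ε := by ring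
      have e2 : (x j - y j) * (ε / a j) = (x j - y j) / a j * ε := by ring
      rw [e1, e2] at hvi
      nlinarith
  -- choose the multiplier
  obtain ⟨lam, hlow, hhigh⟩ : ∃ lam : ℝ,
      (∀ i, x i < u i → lam ≤ (x i - y i) / a i) ∧
      (∀ j, l j < x j → (x j - y j) / a j ≤ lam) := by
    by_cases hU : (Finset.univ.filter fun i => x i < u i).Nonempty
    · refine ⟨(Finset.univ.filter fun i => x i < u i).inf' hU
        (fun i => (x i - y i) / a i), ?_, ?_⟩
      · intro i hi
        exact Finset.inf'_le (f := fun i => (x i - y i) / a i)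
          (Finset.mem_filter.2 ⟨Finset.mem_univ i, hi⟩)
      · intro j hj
        exact Finset.le_inf' _ _ fun i hi =>
          exch i j (Finset.mem_filter.1 hi).2 hj
    · by_cases hL : (Finset.univ.filter fun j => l j < x j).Nonempty
      · refine ⟨(Finset.univ.filter fun j => l j < x j).sup' hL
          (fun j => (x j - y j) / a j), ?_, ?_⟩
        · intro i hi
          exact absurd ⟨i, Finset.mem_filter.2 ⟨Finset.mem_univ _, hi⟩⟩ hU
        · intro j hj
          exact Finset.le_sup' (f := fun j => (x j - y j) / a j)
            (Finset.mem_filter.2 ⟨Finset.mem_univ j, hj⟩)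
      · refine ⟨0, ?_, ?_⟩
        · intro i hi
          exact absurd ⟨i, Finset.mem_filter.2 ⟨Finset.mem_univ _, hi⟩⟩ hU
        · intro j hj
          exact absurd ⟨j, Finset.mem_filter.2 ⟨Finset.mem_univ _, hj⟩⟩ hL
  refine ⟨lam, fun i => ?_⟩
  have hb1 := (hfeas.1 i).1
  have hb2 := (hfeas.1 i).2
  rcases eq_or_lt_of_le hb2 with hxu | hxu
  · -- x i = u i
    rcases eq_or_lt_of_le hb1 with hlx | hlx
    · -- l i = x i = u i
      have : min (y i + lam * a i) (u i) ≤ l i := by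
        rw [← hxu, ← hlx]; exact min_le_right _ _
      rw [max_eq_left this]; exact hlx.symm
    · have hg := hhigh i hlx
      rw [hxu] at hg
      have : u i ≤ y i + lam * a i := by
        rw [div_le_iff₀ (ha i)] at hg; linarith
      rw [min_eq_right this, max_eq_right (hb1.trans hb2)]
      exact hxu
  · -- x i < u i
    have hg1 := hlow i hxu
    rcases eq_or_lt_of_le hb1 with hlx | hlx
    · -- x i = l i
      have : y i + lam * a i ≤ l i := by
        rw [le_div_iff₀ (ha i)] at hg1; linarith
      have hmle : min (y i + lam * a i) (u i) ≤ l i :=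
        le_trans (min_le_left _ _) this
      rw [max_eq_left hmle]; exact hlx.symm
    · have hg2 := hhigh i hlx
      have hxe : x i = y i + lam * a i := by
        rw [le_div_iff₀ (ha i)] at hg1
        rw [div_le_iff₀ (ha i)] at hg2
        linarith
      rw [← hxe, min_eq_left hxu.le, max_eq_right hb1]


-- `0 ≤ (clamp(w) - w) * (z - clamp(w))` for `z ∈ [l,u]`
lemma clamp_term (l u zi w : ℝ) (hlz : l ≤ zi) (hzu : zi ≤ u) :
    0 ≤ (max l (min w u) - w) * (zi - max l (min w u)) := by
  rcases le_total w l with h1 | h1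
  · have hm : min w u ≤ l := le_trans (min_le_left _ _) h1
    rw [max_eq_left hm]
    exact mul_nonneg (by linarith) (by linarith)
  · rcases le_total w u with h2 | h2
    · rw [min_eq_left h2, max_eq_right h1, sub_self, zero_mul]
    · rw [min_eq_right h2, max_eq_right (le_trans hlz hzu)]
      nlinarith [mul_nonneg (show (0:ℝ) ≤ w - u by linarith) (show (0:ℝ) ≤ u - zi by linarith)]

-- clamp is monotone in the multiplier
lemma clamp_mono (l u yv av l1 l2 : ℝ) (ha : 0 < av) (h : l1 ≤ l2) :
    max l (min (yv + l1 * av) u) ≤ max l (min (yv + l2 * av) u) :=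
  max_le_max le_rfl (min_le_min (by nlinarith) le_rfl)

-- the mid of the two clamps is the clamp at the clamped multiplier
lemma mid_clamp (l u yv av l1 l2 : ℝ) (hlu : l ≤ u) (ha : 0 < av)
    (h12 : l1 ≤ l2) :
    max (max l (min (yv + l1 * av) u)) (min yv (max l (min (yv + l2 * av) u)))
      = max l (min (yv + max l1 (min 0 l2) * av) u) := by
  set c1 := max l (min (yv + l1 * av) u) with hc1
  set c2 := max l (min (yv + l2 * av) u) with hc2
  have hc12 : c1 ≤ c2 := clamp_mono l u yv av l1 l2 ha h12
  have hc1u : c1 ≤ u := max_le hlu (min_le_right _ _)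
  have hc2u : c2 ≤ u := max_le hlu (min_le_right _ _)
  have hlc1 : l ≤ c1 := le_max_left _ _
  have hlc2 : l ≤ c2 := le_max_left _ _
  rcases le_or_gt 0 l1 with hs1 | hs1
  · -- lam* = l1
    have hlam : max l1 (min 0 l2) = l1 :=
      max_eq_left (le_trans (min_le_left _ _) hs1)
    rw [hlam, ← hc1]
    -- goal: max c1 (min yv c2) = c1
    have : min yv c2 ≤ c1 := by
      have h1 : min yv c2 ≤ min yv u := min_le_min le_rfl hc2u
      have h2 : min yv u ≤ min (yv + l1 * av) u :=
        min_le_min (by nlinarith) le_rfl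
      exact le_trans h1 (le_trans h2 (le_max_right _ _))
    exact max_eq_left this
  · rcases le_or_gt l2 0 with hs2 | hs2
    · -- lam* = l2
      have hlam : max l1 (min 0 l2) = l2 := by
        rw [min_eq_right hs2]; exact max_eq_right h12
      rw [hlam, ← hc2]
      -- goal: max c1 (min yv c2) = c2
      rcases le_or_gt c2 yv with h | h
      · rw [min_eq_right h]; exact max_eq_right hc12
      · -- yv < c2 forces c2 = l, hence c1 = l
        have hc2l : c2 = l := by
          have hm : min (yv + l2 * av) u ≤ yv :=
            le_trans (min_le_left _ _) (by nlinarith)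
          rcases max_cases l (min (yv + l2 * av) u) with ⟨he, _⟩ | ⟨he, _⟩
          · exact he
          · exfalso
            rw [hc2, he] at h
            linarith
        have hc1l : c1 = l := le_antisymm (hc2l ▸ hc12) hlc1
        rw [hc2l, hc1l]
        exact max_eq_left (le_trans (min_le_right _ _) le_rfl)
    · -- l1 < 0 < l2 : lam* = 0
      have hlam : max l1 (min 0 l2) = 0 := by
        rw [min_eq_left hs2.le]; exact max_eq_right hs1.le
      rw [hlam, zero_mul, add_zero]
      rcases le_or_gt l yv with h1 | h1
      · rcases le_or_gt yv u with h2 | h2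
        · -- yv ∈ [l,u]
          have hr : max l (min yv u) = yv := by
            rw [min_eq_left h2]; exact max_eq_right h1
          rw [hr]
          have hy2 : yv ≤ c2 := by
            have : min yv u ≤ min (yv + l2 * av) u :=
              min_le_min (by nlinarith) le_rfl
            rw [min_eq_left h2] at this
            exact le_trans this (le_max_right _ _)
          have hy1 : c1 ≤ yv := by
            rw [hc1]
            exact max_le h1 (le_trans (min_le_left _ _) (by nlinarith))
          rw [min_eq_left hy2]
          exact max_eq_right hy1
        · -- u < yv
          have hr : max l (min yv u) = u := by
            rw [min_eq_right h2.le]; exact max_eq_right hlu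
          rw [hr]
          have hc2e : c2 = u := by
            rw [hc2, min_eq_right (by nlinarith)]
            exact max_eq_right hlu
          rw [hc2e, min_eq_right h2.le]
          exact max_eq_right hc1u
      · -- yv < l
        have hr : max l (min yv u) = l := by
          exact max_eq_left (le_trans (min_le_left _ _) h1.le)
        rw [hr]
        have hc1e : c1 = l := by
          rw [hc1]
          exact max_eq_left (le_trans (min_le_left _ _) (by nlinarith))
        rw [hc1e]
        exact max_eq_left (le_trans (min_le_left _ _)
          (le_trans h1.le le_rfl))



/-- Projection onto the inequality knapsack set
`D_I = {x : l ≤ x ≤ u, b_l ≤ aᵀx ≤ b_u}` (with `aᵢ > 0` for all `i`):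
if `x_L*` and `x_U*` are the unique minimizers of `½‖x − y‖₂²` over the
equality knapsack sets with right-hand sides `b_l` and `b_u` respectively,
then `min_{x ∈ D_I} ½‖x − y‖₂²` has a unique solution `x*` and
`x* = mid(x_L*, y, x_U*)` componentwise. -/
theorem knapsack_inequality_projection (n : ℕ) (a l u y xL xU : Fin n → ℝ)
    (bl bu : ℝ)
    (hlu : ∀ i, l i ≤ u i) (ha : ∀ i, 0 < a i) (hb : bl ≤ bu)
    (hne : ∃ x : Fin n → ℝ, (∀ i, l i ≤ x i ∧ x i ≤ u i) ∧
      bl ≤ ∑ i, a i * x i ∧ ∑ i, a i * x i ≤ bu)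
    (hxLfeas : (∀ i, l i ≤ xL i ∧ xL i ≤ u i) ∧ ∑ i, a i * xL i = bl)
    (hxLmin : ∀ z : Fin n → ℝ,
      ((∀ i, l i ≤ z i ∧ z i ≤ u i) ∧ ∑ i, a i * z i = bl) →
      (1 / 2) * ∑ i, (xL i - y i) ^ 2 ≤ (1 / 2) * ∑ i, (z i - y i) ^ 2)
    (hxLuniq : ∀ x' : Fin n → ℝ,
      (((∀ i, l i ≤ x' i ∧ x' i ≤ u i) ∧ ∑ i, a i * x' i = bl) ∧
        ∀ z : Fin n → ℝ, ((∀ i, l i ≤ z i ∧ z i ≤ u i) ∧ ∑ i, a i * z i = bl) →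
          (1 / 2) * ∑ i, (x' i - y i) ^ 2 ≤ (1 / 2) * ∑ i, (z i - y i) ^ 2) →
      x' = xL)
    (hxUfeas : (∀ i, l i ≤ xU i ∧ xU i ≤ u i) ∧ ∑ i, a i * xU i = bu)
    (hxUmin : ∀ z : Fin n → ℝ,
      ((∀ i, l i ≤ z i ∧ z i ≤ u i) ∧ ∑ i, a i * z i = bu) →
      (1 / 2) * ∑ i, (xU i - y i) ^ 2 ≤ (1 / 2) * ∑ i, (z i - y i) ^ 2)
    (hxUuniq : ∀ x' : Fin n → ℝ,
      (((∀ i, l i ≤ x' i ∧ x' i ≤ u i) ∧ ∑ i, a i * x' i = bu) ∧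
        ∀ z : Fin n → ℝ, ((∀ i, l i ≤ z i ∧ z i ≤ u i) ∧ ∑ i, a i * z i = bu) →
          (1 / 2) * ∑ i, (x' i - y i) ^ 2 ≤ (1 / 2) * ∑ i, (z i - y i) ^ 2) →
      x' = xU) :
    ∃ xstar : Fin n → ℝ,
      ((∀ i, l i ≤ xstar i ∧ xstar i ≤ u i) ∧
        bl ≤ ∑ i, a i * xstar i ∧ ∑ i, a i * xstar i ≤ bu) ∧
      (∀ z : Fin n → ℝ,
        ((∀ i, l i ≤ z i ∧ z i ≤ u i) ∧ bl ≤ ∑ i, a i * z i ∧ ∑ i, a i * z i ≤ bu) →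
        (1 / 2) * ∑ i, (xstar i - y i) ^ 2 ≤ (1 / 2) * ∑ i, (z i - y i) ^ 2) ∧
      (∀ x' : Fin n → ℝ,
        (((∀ i, l i ≤ x' i ∧ x' i ≤ u i) ∧
            bl ≤ ∑ i, a i * x' i ∧ ∑ i, a i * x' i ≤ bu) ∧
          ∀ z : Fin n → ℝ,
            ((∀ i, l i ≤ z i ∧ z i ≤ u i) ∧
              bl ≤ ∑ i, a i * z i ∧ ∑ i, a i * z i ≤ bu) →
            (1 / 2) * ∑ i, (x' i - y i) ^ 2 ≤ (1 / 2) * ∑ i, (z i - y i) ^ 2) →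
        x' = xstar) ∧
      xstar = fun i => max (xL i) (min (y i) (xU i)) := by
  obtain ⟨lamL, hL⟩ := exists_mult n a l u y xL bl ha hxLfeas hxLmin
  obtain ⟨lamU, hU2⟩ := exists_mult n a l u y xU bu ha hxUfeas hxUmin
  obtain ⟨l1, l2, h12, hc1, hc2⟩ : ∃ l1 l2 : ℝ, l1 ≤ l2 ∧
      (∀ i, xL i = max (l i) (min (y i + l1 * a i) (u i))) ∧
      (∀ i, xU i = max (l i) (min (y i + l2 * a i) (u i))) := by
    rcases le_total lamL lamU with h | h
    · exact ⟨lamL, lamU, h, hL, hU2⟩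
    · have hxUL : ∀ i, xU i ≤ xL i := fun i => by
        rw [hL i, hU2 i]
        exact clamp_mono (l i) (u i) (y i) (a i) lamU lamL (ha i) h
      have hdiff : ∀ i ∈ Finset.univ, (0:ℝ) ≤ a i * (xL i - xU i) :=
        fun i _ => mul_nonneg (ha i).le (by linarith [hxUL i])
      have hsum : ∑ i, a i * (xL i - xU i) = bl - bu := by
        rw [Finset.sum_congr rfl fun i (_ : i ∈ Finset.univ) =>
          mul_sub (a i) (xL i) (xU i), Finset.sum_sub_distrib,
          hxLfeas.2, hxUfeas.2]
      have hzero : ∑ i, a i * (xL i - xU i) = 0 :=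
        le_antisymm (by rw [hsum]; linarith) (Finset.sum_nonneg hdiff)
      have heq : ∀ i, xL i = xU i := by
        intro i
        have h0 := (Finset.sum_eq_zero_iff_of_nonneg hdiff).1 hzero i
          (Finset.mem_univ i)
        rcases mul_eq_zero.1 h0 with h' | h'
        · exact absurd h' (ha i).ne'
        · linarith [sub_eq_zero.1 h']
      exact ⟨lamU, lamL, h, fun i => (heq i).trans (hU2 i),
        fun i => (heq i).symm.trans (hL i)⟩
  set lam := max l1 (min 0 l2) with hlamdef
  set m : Fin n → ℝ := fun i => max (xL i) (min (y i) (xU i)) with hmdef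
  have hmc : ∀ i, m i = max (l i) (min (y i + lam * a i) (u i)) := by
    intro i
    simp only [hmdef]
    rw [hc1 i, hc2 i]
    exact mid_clamp (l i) (u i) (y i) (a i) l1 l2 (hlu i) (ha i) h12
  have hxLxU : ∀ i, xL i ≤ xU i := fun i => by
    rw [hc1 i, hc2 i]
    exact clamp_mono (l i) (u i) (y i) (a i) l1 l2 (ha i) h12
  have hxLm : ∀ i, xL i ≤ m i := fun i => le_max_left _ _
  have hmxU : ∀ i, m i ≤ xU i := fun i => max_le (hxLxU i) (min_le_right _ _)
  have hmbox : ∀ i, l i ≤ m i ∧ m i ≤ u i := fun i =>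
    ⟨le_trans (hxLfeas.1 i).1 (hxLm i), le_trans (hmxU i) (hxUfeas.1 i).2⟩
  have hsum_lb : bl ≤ ∑ i, a i * m i := by
    rw [← hxLfeas.2]
    exact Finset.sum_le_sum fun i _ =>
      mul_le_mul_of_nonneg_left (hxLm i) (ha i).le
  have hsum_ub : ∑ i, a i * m i ≤ bu := by
    rw [← hxUfeas.2]
    exact Finset.sum_le_sum fun i _ =>
      mul_le_mul_of_nonneg_left (hmxU i) (ha i).le
  have hmfeas : (∀ i, l i ≤ m i ∧ m i ≤ u i) ∧
      bl ≤ ∑ i, a i * m i ∧ ∑ i, a i * m i ≤ bu := ⟨hmbox, hsum_lb, hsum_ub⟩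
  have hVI : ∀ z : Fin n → ℝ,
      ((∀ i, l i ≤ z i ∧ z i ≤ u i) ∧
        bl ≤ ∑ i, a i * z i ∧ ∑ i, a i * z i ≤ bu) →
      0 ≤ ∑ i, (m i - y i) * (z i - m i) := by
    intro z hz
    have hdecomp : ∑ i, (m i - y i) * (z i - m i)
        = ∑ i, (m i - (y i + lam * a i)) * (z i - m i)
          + lam * (∑ i, a i * z i - ∑ i, a i * m i) := by
      rw [← Finset.sum_sub_distrib, Finset.mul_sum, ← Finset.sum_add_distrib]
      exact Finset.sum_congr rfl fun i _ => by ring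
    rw [hdecomp]
    have hfirst : 0 ≤ ∑ i, (m i - (y i + lam * a i)) * (z i - m i) :=
      Finset.sum_nonneg fun i _ => by
        rw [hmc i]
        exact clamp_term (l i) (u i) (z i) (y i + lam * a i)
          (hz.1 i).1 (hz.1 i).2
    have hsecond : 0 ≤ lam * (∑ i, a i * z i - ∑ i, a i * m i) := by
      rcases lt_trichotomy lam 0 with hl0 | hl0 | hl0
      · -- lam = l2 and m = xU
        have hlam2 : lam = l2 := by
          have hl2 : l2 ≤ 0 := by
            by_contra hc
            push_neg at hc
            rw [hlamdef, min_eq_left hc.le] at hl0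
            have := le_max_right l1 (0:ℝ)
            linarith
          rw [hlamdef, min_eq_right hl2]
          exact max_eq_right h12
        have hmU : ∀ i, m i = xU i := fun i => by
          rw [hmc i, hlam2, ← hc2 i]
        have hmsum : ∑ i, a i * m i = bu := by
          rw [Finset.sum_congr rfl fun i (_ : i ∈ Finset.univ) => by
            rw [hmU i], hxUfeas.2]
        rw [hmsum]
        nlinarith [hz.2.2]
      · rw [hl0, zero_mul]
      · -- lam = l1 and m = xL
        have hlam1 : lam = l1 := by
          rw [hlamdef] at hl0 ⊢
          rcases max_cases l1 (min 0 l2) with ⟨he, _⟩ | ⟨he, _⟩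
          · exact he
          · exfalso
            rw [he] at hl0
            linarith [min_le_left (0:ℝ) l2]
        have hmL : ∀ i, m i = xL i := fun i => by
          rw [hmc i, hlam1, ← hc1 i]
        have hmsum : ∑ i, a i * m i = bl := by
          rw [Finset.sum_congr rfl fun i (_ : i ∈ Finset.univ) => by
            rw [hmL i], hxLfeas.2]
        rw [hmsum]
        nlinarith [hz.2.1]
    exact add_nonneg hfirst hsecond
  refine ⟨m, hmfeas, ?_, ?_, ?_⟩
  · intro z hz
    have hexp := sum_sq_expand' n m y z
    have hS := hVI z hz
    have hQ : 0 ≤ ∑ i, (z i - m i) ^ 2 :=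
      Finset.sum_nonneg fun i _ => sq_nonneg _
    rw [hexp]
    linarith
  · rintro x' ⟨hx'f, hx'min⟩
    have h1 := hx'min m hmfeas
    have hS := hVI x' hx'f
    have hexp := sum_sq_expand' n m y x'
    rw [hexp] at h1
    have hQle : ∑ i, (x' i - m i) ^ 2 ≤ 0 := by linarith
    have hQz := (Finset.sum_eq_zero_iff_of_nonneg
      (fun i (_ : i ∈ Finset.univ) => sq_nonneg (x' i - m i))).1
      (le_antisymm hQle (Finset.sum_nonneg fun i _ => sq_nonneg _))
    funext i
    exact sub_eq_zero.1 (pow_eq_zero_iff (n := 2) (by norm_num) |>.1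
      (hQz i (Finset.mem_univ i)))
  · exact hmdef.symm ▸ rfl
end

section
/- Let a, l, u, y ∈ ℝⁿ with l ≤ u componentwise and aᵢ > 0 for every i, let b_l ≤ b_u in ℝ, and suppose D_I = {x ∈ ℝⁿ : l ≤ x ≤ u, b_l ≤ aᵀx ≤ b_u} is nonempty. Let x_L* be the unique minimizer of ½‖x − y‖₂² over {x : l ≤ x ≤ u, aᵀx = b_l}, x_U* the unique minimizer over {x : l ≤ x ≤ u, aᵀx = b_u}, and x* the unique minimizer over D_I. Then x_L* ≤ x* ≤ x_U* componentwise. -/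
lemma knapsack_core (n : ℕ) (a l u y xE xS : Fin n → ℝ) (e : ℝ)
    (ha : ∀ i, 0 < a i)
    (hEbox : ∀ i, l i ≤ xE i ∧ xE i ≤ u i)
    (hEeq : ∑ i, a i * xE i = e)
    (hEmin : ∀ z : Fin n → ℝ, ((∀ i, l i ≤ z i ∧ z i ≤ u i) ∧ ∑ i, a i * z i = e) →
      ∑ i, (xE i - y i) ^ 2 ≤ ∑ i, (z i - y i) ^ 2)
    (hSbox : ∀ i, l i ≤ xS i ∧ xS i ≤ u i)
    (hSmin : ∀ z : Fin n → ℝ,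
      ((∀ i, l i ≤ z i ∧ z i ≤ u i) ∧ ∑ i, a i * z i = ∑ i, a i * xS i) →
      ∑ i, (xS i - y i) ^ 2 ≤ ∑ i, (z i - y i) ^ 2)
    (hle : e ≤ ∑ i, a i * xS i) :
    ∀ i, xE i ≤ xS i := by
  by_contra h
  push_neg at h
  obtain ⟨i0, hi0⟩ := h
  set w : Fin n → ℝ := fun j => min (xE j) (xS j) with hw
  set v : Fin n → ℝ := fun j => max (xE j) (xS j) with hv
  have hwv : ∀ j, w j ≤ v j := fun j => min_le_max
  have hwi0 : w i0 = xS i0 := min_eq_right hi0.le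
  have hvi0 : v i0 = xE i0 := max_eq_left hi0.le
  -- S > 0
  set S : ℝ := ∑ j, a j * (v j - w j) with hS
  have hSterm : ∀ j ∈ Finset.univ, 0 ≤ a j * (v j - w j) := fun j _ =>
    mul_nonneg (ha j).le (by linarith [hwv j])
  have hSpos : 0 < S := by
    apply Finset.sum_pos' hSterm
    exact ⟨i0, Finset.mem_univ i0, mul_pos (ha i0) (by rw [hwi0, hvi0]; linarith)⟩
  set Aw : ℝ := ∑ j, a j * w j with hAw
  set Av : ℝ := ∑ j, a j * v j with hAv
  have hAwE : Aw ≤ e := by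
    rw [← hEeq]
    exact Finset.sum_le_sum fun j _ =>
      mul_le_mul_of_nonneg_left (min_le_left _ _) (ha j).le
  have hAvS : ∑ i, a i * xS i ≤ Av :=
    Finset.sum_le_sum fun j _ => mul_le_mul_of_nonneg_left (le_max_right _ _) (ha j).le
  have hAvw : Av = Aw + S := by
    rw [hAv, hAw, hS, ← Finset.sum_add_distrib]
    exact Finset.sum_congr rfl fun j _ => by ring
  set θ : ℝ := (e - Aw) / S with hθ
  have hθ0 : 0 ≤ θ := div_nonneg (by linarith) hSpos.le
  have hθ1 : θ ≤ 1 := (div_le_one hSpos).mpr (by linarith)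
  have hθS : θ * S = e - Aw := div_mul_cancel₀ _ hSpos.ne'
  set p : Fin n → ℝ := fun j => w j + θ * (v j - w j) with hp
  set q : Fin n → ℝ := fun j => v j - θ * (v j - w j) with hq
  have hAp : ∑ j, a j * p j = e := by
    have : ∑ j, a j * p j = Aw + θ * S := by
      rw [hAw, hS, Finset.mul_sum, ← Finset.sum_add_distrib]
      exact Finset.sum_congr rfl fun j _ => by simp only [hp]; ring
    rw [this, hθS]; ring
  have hAq : ∑ j, a j * q j = ∑ j, a j * xS j := by
    have h1 : ∑ j, a j * q j = Av - θ * S := by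
      rw [hAv, hS, Finset.mul_sum, ← Finset.sum_sub_distrib]
      exact Finset.sum_congr rfl fun j _ => by simp only [hq]; ring
    have h2 : Aw + Av = e + ∑ j, a j * xS j := by
      rw [← hEeq, hAw, hAv, ← Finset.sum_add_distrib, ← Finset.sum_add_distrib]
      exact Finset.sum_congr rfl fun j _ => by
        have h := min_add_max (xE j) (xS j)
        simp only [hw, hv]; linear_combination a j * h
    rw [h1, hθS]; linarith
  have hpbox : ∀ j, l j ≤ p j ∧ p j ≤ u j := by
    intro j
    have h1 : l j ≤ w j := le_min (hEbox j).1 (hSbox j).1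
    have h2 : v j ≤ u j := max_le (hEbox j).2 (hSbox j).2
    have h3 : 0 ≤ θ * (v j - w j) := mul_nonneg hθ0 (by linarith [hwv j])
    have h4 : θ * (v j - w j) ≤ v j - w j := by nlinarith [hwv j]
    constructor <;> simp only [hp] <;> linarith
  have hqbox : ∀ j, l j ≤ q j ∧ q j ≤ u j := by
    intro j
    have h1 : l j ≤ w j := le_min (hEbox j).1 (hSbox j).1
    have h2 : v j ≤ u j := max_le (hEbox j).2 (hSbox j).2
    have h3 : 0 ≤ θ * (v j - w j) := mul_nonneg hθ0 (by linarith [hwv j])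
    have h4 : θ * (v j - w j) ≤ v j - w j := by nlinarith [hwv j]
    constructor <;> simp only [hq] <;> linarith
  have h1 := hEmin p ⟨hpbox, hAp⟩
  have h2 := hSmin q ⟨hqbox, hAq⟩
  set T : ℝ := ∑ j, (v j - w j) ^ 2 with hT
  have hTpos : 0 < T := by
    apply Finset.sum_pos' (fun j _ => sq_nonneg _)
    refine ⟨i0, Finset.mem_univ i0, ?_⟩
    rw [hwi0, hvi0]; nlinarith
  have hid : ∑ j, (p j - y j) ^ 2 + ∑ j, (q j - y j) ^ 2
      = ∑ j, (xE j - y j) ^ 2 + ∑ j, (xS j - y j) ^ 2 - 2 * θ * (1 - θ) * T := by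
    have key : ∀ j, (p j - y j) ^ 2 + (q j - y j) ^ 2
        = (xE j - y j) ^ 2 + (xS j - y j) ^ 2 - 2 * θ * (1 - θ) * (v j - w j) ^ 2 := by
      intro j
      have hsq : (w j - y j) ^ 2 + (v j - y j) ^ 2
          = (xE j - y j) ^ 2 + (xS j - y j) ^ 2 := by
        rcases le_total (xE j) (xS j) with h | h
        · simp only [hw, hv, min_eq_left h, max_eq_right h]
        · simp only [hw, hv, min_eq_right h, max_eq_left h]; ring
      have ringid : (p j - y j) ^ 2 + (q j - y j) ^ 2
          = (w j - y j) ^ 2 + (v j - y j) ^ 2 - 2 * θ * (1 - θ) * (v j - w j) ^ 2 := by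
        simp only [hp, hq]; ring
      rw [ringid, hsq]
    rw [hT, ← Finset.sum_add_distrib, Finset.mul_sum,
      Finset.sum_congr rfl fun j _ => key j, Finset.sum_sub_distrib, Finset.sum_add_distrib]
  have hθθ : θ * (1 - θ) = 0 := by
    have hnn : 0 ≤ θ * (1 - θ) := mul_nonneg hθ0 (by linarith)
    nlinarith
  have hzero : ∀ j, a j * (xE j - xS j) ≤ 0 → True := fun _ _ => trivial
  rcases mul_eq_zero.mp hθθ with hc | hc
  · -- θ = 0 : Aw = e, so w = xE, contradiction at i0
    have heAw : e = Aw := by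
      have : e - Aw = θ * S := hθS.symm
      rw [hc] at this; linarith
    have hsum0 : ∑ j, a j * (xE j - w j) = 0 := by
      rw [Finset.sum_congr rfl (fun j _ => (mul_sub (a j) (xE j) (w j)) ),
        Finset.sum_sub_distrib, hEeq, ← hAw, heAw, sub_self]
    have hall := (Finset.sum_eq_zero_iff_of_nonneg (fun j _ =>
      mul_nonneg (ha j).le (by simp only [hw]; linarith [min_le_left (xE j) (xS j)]))).mp hsum0
    have := hall i0 (Finset.mem_univ i0)
    have hx : xE i0 - w i0 = 0 := by
      rcases mul_eq_zero.mp this with h | h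
      · exact absurd h (ha i0).ne'
      · exact h
    rw [hwi0] at hx; linarith
  · -- θ = 1 : Av = e, so v = xE, so xS ≤ xE, then xS = xE, contradiction
    have hθ1' : θ = 1 := by linarith
    have hAve : Av = e := by
      have : θ * S = e - Aw := hθS
      rw [hθ1', one_mul] at this; linarith
    have hsum0 : ∑ j, a j * (v j - xE j) = 0 := by
      rw [Finset.sum_congr rfl (fun j _ => (mul_sub (a j) (v j) (xE j)) ),
        Finset.sum_sub_distrib, hEeq, ← hAv, hAve, sub_self]
    have hall := (Finset.sum_eq_zero_iff_of_nonneg (fun j _ =>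
      mul_nonneg (ha j).le (by simp only [hv]; linarith [le_max_left (xE j) (xS j)]))).mp hsum0
    have hvE : ∀ j, v j = xE j := by
      intro j
      have := hall j (Finset.mem_univ j)
      rcases mul_eq_zero.mp this with h | h
      · exact absurd h (ha j).ne'
      · linarith
    have hSE : ∀ j, xS j ≤ xE j := fun j => by
      have := le_max_right (xE j) (xS j); rw [show max (xE j) (xS j) = v j from rfl, hvE j] at this
      exact this
    have hASle : ∑ j, a j * xS j ≤ e := by
      rw [← hEeq]
      exact Finset.sum_le_sum fun j _ => mul_le_mul_of_nonneg_left (hSE j) (ha j).le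
    have hASe : ∑ j, a j * xS j = e := le_antisymm hASle hle
    have hsum0' : ∑ j, a j * (xE j - xS j) = 0 := by
      rw [Finset.sum_congr rfl (fun j _ => (mul_sub (a j) (xE j) (xS j)) ),
        Finset.sum_sub_distrib, hEeq, hASe, sub_self]
    have hall' := (Finset.sum_eq_zero_iff_of_nonneg (fun j _ =>
      mul_nonneg (ha j).le (by linarith [hSE j]))).mp hsum0'
    have := hall' i0 (Finset.mem_univ i0)
    rcases mul_eq_zero.mp this with h | h
    · exact absurd h (ha i0).ne'
    · linarith



/-- With `aᵢ > 0` for all `i`: if `x_L*`, `x_U*` are the unique minimizers of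
`½‖x − y‖₂²` over the equality knapsack sets with right-hand sides `b_l`, `b_u`,
and `x*` is the unique minimizer over
`D_I = {x : l ≤ x ≤ u, b_l ≤ aᵀx ≤ b_u}`, then `x_L* ≤ x* ≤ x_U*`
componentwise. -/
theorem knapsack_inequality_projection_between (n : ℕ)
    (a l u y xL xU xstar : Fin n → ℝ) (bl bu : ℝ)
    (hlu : ∀ i, l i ≤ u i) (ha : ∀ i, 0 < a i) (hb : bl ≤ bu)
    (hne : ∃ x : Fin n → ℝ, (∀ i, l i ≤ x i ∧ x i ≤ u i) ∧
      bl ≤ ∑ i, a i * x i ∧ ∑ i, a i * x i ≤ bu)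
    (hxLfeas : (∀ i, l i ≤ xL i ∧ xL i ≤ u i) ∧ ∑ i, a i * xL i = bl)
    (hxLmin : ∀ z : Fin n → ℝ,
      ((∀ i, l i ≤ z i ∧ z i ≤ u i) ∧ ∑ i, a i * z i = bl) →
      (1 / 2) * ∑ i, (xL i - y i) ^ 2 ≤ (1 / 2) * ∑ i, (z i - y i) ^ 2)
    (hxLuniq : ∀ x' : Fin n → ℝ,
      (((∀ i, l i ≤ x' i ∧ x' i ≤ u i) ∧ ∑ i, a i * x' i = bl) ∧
        ∀ z : Fin n → ℝ, ((∀ i, l i ≤ z i ∧ z i ≤ u i) ∧ ∑ i, a i * z i = bl) →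
          (1 / 2) * ∑ i, (x' i - y i) ^ 2 ≤ (1 / 2) * ∑ i, (z i - y i) ^ 2) →
      x' = xL)
    (hxUfeas : (∀ i, l i ≤ xU i ∧ xU i ≤ u i) ∧ ∑ i, a i * xU i = bu)
    (hxUmin : ∀ z : Fin n → ℝ,
      ((∀ i, l i ≤ z i ∧ z i ≤ u i) ∧ ∑ i, a i * z i = bu) →
      (1 / 2) * ∑ i, (xU i - y i) ^ 2 ≤ (1 / 2) * ∑ i, (z i - y i) ^ 2)
    (hxUuniq : ∀ x' : Fin n → ℝ,
      (((∀ i, l i ≤ x' i ∧ x' i ≤ u i) ∧ ∑ i, a i * x' i = bu) ∧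
        ∀ z : Fin n → ℝ, ((∀ i, l i ≤ z i ∧ z i ≤ u i) ∧ ∑ i, a i * z i = bu) →
          (1 / 2) * ∑ i, (x' i - y i) ^ 2 ≤ (1 / 2) * ∑ i, (z i - y i) ^ 2) →
      x' = xU)
    (hxSfeas : (∀ i, l i ≤ xstar i ∧ xstar i ≤ u i) ∧
      bl ≤ ∑ i, a i * xstar i ∧ ∑ i, a i * xstar i ≤ bu)
    (hxSmin : ∀ z : Fin n → ℝ,
      ((∀ i, l i ≤ z i ∧ z i ≤ u i) ∧ bl ≤ ∑ i, a i * z i ∧ ∑ i, a i * z i ≤ bu) →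
      (1 / 2) * ∑ i, (xstar i - y i) ^ 2 ≤ (1 / 2) * ∑ i, (z i - y i) ^ 2)
    (hxSuniq : ∀ x' : Fin n → ℝ,
      (((∀ i, l i ≤ x' i ∧ x' i ≤ u i) ∧
          bl ≤ ∑ i, a i * x' i ∧ ∑ i, a i * x' i ≤ bu) ∧
        ∀ z : Fin n → ℝ,
          ((∀ i, l i ≤ z i ∧ z i ≤ u i) ∧
            bl ≤ ∑ i, a i * z i ∧ ∑ i, a i * z i ≤ bu) →
          (1 / 2) * ∑ i, (x' i - y i) ^ 2 ≤ (1 / 2) * ∑ i, (z i - y i) ^ 2) →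
      x' = xstar) :
    ∀ i, xL i ≤ xstar i ∧ xstar i ≤ xU i := by
  intro i
  constructor
  · exact knapsack_core n a l u y xL xstar bl ha hxLfeas.1 hxLfeas.2
      (fun z hz => by linarith [hxLmin z hz])
      hxSfeas.1
      (fun z hz => by
        have hm := hxSmin z ⟨hz.1, by rw [hz.2]; exact hxSfeas.2⟩
        linarith)
      hxSfeas.2.1 i
  · have key := knapsack_core n a (fun j => -u j) (fun j => -l j) (fun j => -y j)
      (fun j => -xU j) (fun j => -xstar j) (-bu) ha
      (fun j => ⟨neg_le_neg (hxUfeas.1 j).2, neg_le_neg (hxUfeas.1 j).1⟩)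
      (by simp [mul_neg, Finset.sum_neg_distrib, hxUfeas.2])
      (fun z hz => by
        have hzbox : ∀ j, l j ≤ -z j ∧ -z j ≤ u j := fun j => by
          have hbj := hz.1 j
          exact ⟨by linarith [hbj.2], by linarith [hbj.1]⟩
        have hzsum : ∑ j, a j * (-z j) = bu := by
          have h2 := hz.2
          simp only [mul_neg, Finset.sum_neg_distrib] at h2 ⊢
          linarith
        have hm := hxUmin (fun j => -z j) ⟨hzbox, hzsum⟩
        have e1 : ∑ j, (-xU j - -y j) ^ 2 = ∑ j, (xU j - y j) ^ 2 :=
          Finset.sum_congr rfl fun j _ => by ring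
        have e2 : ∑ j, (z j - -y j) ^ 2 = ∑ j, (-z j - y j) ^ 2 :=
          Finset.sum_congr rfl fun j _ => by ring
        rw [e1, e2]; linarith)
      (fun j => ⟨neg_le_neg (hxSfeas.1 j).2, neg_le_neg (hxSfeas.1 j).1⟩)
      (fun z hz => by
        have hzbox : ∀ j, l j ≤ -z j ∧ -z j ≤ u j := fun j => by
          have hbj := hz.1 j
          exact ⟨by linarith [hbj.2], by linarith [hbj.1]⟩
        have hzsum : ∑ j, a j * (-z j) = ∑ j, a j * xstar j := by
          have h2 := hz.2
          simp only [mul_neg, Finset.sum_neg_distrib] at h2 ⊢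
          linarith
        have hm := hxSmin (fun j => -z j)
          ⟨hzbox, by rw [hzsum]; exact ⟨hxSfeas.2.1, hxSfeas.2.2⟩⟩
        have e1 : ∑ j, (-xstar j - -y j) ^ 2 = ∑ j, (xstar j - y j) ^ 2 :=
          Finset.sum_congr rfl fun j _ => by ring
        have e2 : ∑ j, (z j - -y j) ^ 2 = ∑ j, (-z j - y j) ^ 2 :=
          Finset.sum_congr rfl fun j _ => by ring
        rw [e1, e2]; linarith)
      (by simp only [mul_neg, Finset.sum_neg_distrib, neg_le_neg_iff]
          exact hxSfeas.2.2) i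
    linarith [key]
end

section
/- Let a ∈ ℝⁿ be nonzero, b_l ≤ b_u in ℝ, and y ∈ ℝⁿ. Define zl, zu ∈ ℝⁿ by zlᵢ = yᵢ − aᵢ·(Σⱼ aⱼ·yⱼ − b_l)/(Σⱼ aⱼ²) and zuᵢ = yᵢ − aᵢ·(Σⱼ aⱼ·yⱼ − b_u)/(Σⱼ aⱼ²). Then the vector z whose i-th component is the median of the three numbers {zlᵢ, yᵢ, zuᵢ} is the unique minimizer of ½‖x − y‖₂² over the slab {x ∈ ℝⁿ : b_l ≤ aᵀx ≤ b_u}. -/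
set_option maxHeartbeats 2000000 in
lemma slab_med_aux (p c t1 t2 : ℝ) (h : t2 ≤ t1) :
    max (min (p - c*t1) p) (min (max (p - c*t1) p) (p - c*t2))
      = p - c * max t2 (min t1 0) := by
  rcases le_total c 0 with hc | hc <;> rcases le_total t1 0 with h1 | h1 <;>
    rcases le_total t2 0 with h2 | h2 <;>
    simp only [min_def, max_def] <;> split_ifs <;> nlinarith


/-- Projection onto a slab: for nonzero `a`, `b_l ≤ b_u`, and `y ∈ ℝⁿ`, let
`zlᵢ = yᵢ − aᵢ·(Σⱼ aⱼyⱼ − b_l)/(Σⱼ aⱼ²)` and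
`zuᵢ = yᵢ − aᵢ·(Σⱼ aⱼyⱼ − b_u)/(Σⱼ aⱼ²)`. Then the vector `z` whose `i`-th
component is the median of `{zlᵢ, yᵢ, zuᵢ}` is the unique minimizer of
`½‖x − y‖₂²` over `{x : b_l ≤ aᵀx ≤ b_u}`.  (The median of three reals
`p, q, r` is `max (min p q) (min (max p q) r)`.) -/
theorem slab_projection (n : ℕ) (a y : Fin n → ℝ) (ha : a ≠ 0) (bl bu : ℝ)
    (hb : bl ≤ bu) (zl zu z : Fin n → ℝ)
    (hzl : ∀ i, zl i = y i - a i * ((∑ j, a j * y j - bl) / ∑ j, a j ^ 2))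
    (hzu : ∀ i, zu i = y i - a i * ((∑ j, a j * y j - bu) / ∑ j, a j ^ 2))
    (hz : ∀ i, z i = max (min (zl i) (y i)) (min (max (zl i) (y i)) (zu i))) :
    (bl ≤ ∑ i, a i * z i ∧ ∑ i, a i * z i ≤ bu) ∧
    (∀ x : Fin n → ℝ, bl ≤ ∑ i, a i * x i → ∑ i, a i * x i ≤ bu →
      (1 / 2) * ∑ i, (z i - y i) ^ 2 ≤ (1 / 2) * ∑ i, (x i - y i) ^ 2) ∧
    (∀ x : Fin n → ℝ,
      ((bl ≤ ∑ i, a i * x i ∧ ∑ i, a i * x i ≤ bu) ∧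
        ∀ w : Fin n → ℝ, bl ≤ ∑ i, a i * w i → ∑ i, a i * w i ≤ bu →
          (1 / 2) * ∑ i, (x i - y i) ^ 2 ≤ (1 / 2) * ∑ i, (w i - y i) ^ 2) →
      x = z) := by
  -- notation
  set s : ℝ := ∑ j, a j * y j with hs
  set S : ℝ := ∑ j, a j ^ 2 with hSdef
  obtain ⟨i0, hi0⟩ : ∃ i, a i ≠ 0 := by
    by_contra h; push_neg at h; exact ha (funext h)
  have hS : 0 < S := by
    have h1 : 0 < a i0 ^ 2 := lt_of_le_of_ne (sq_nonneg _) (Ne.symm (pow_ne_zero 2 hi0))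
    exact lt_of_lt_of_le h1
      (Finset.single_le_sum (fun j _ => sq_nonneg (a j)) (Finset.mem_univ i0))
  set tl : ℝ := (s - bl) / S with htl_def
  set tu : ℝ := (s - bu) / S with htu_def
  have htltu : tu ≤ tl := by
    apply div_le_div_of_nonneg_right ?_ ?_ <;> try linarith
  have hTl : tl * S = s - bl := div_mul_cancel₀ _ hS.ne'
  have hTu : tu * S = s - bu := div_mul_cancel₀ _ hS.ne'
  set t : ℝ := max tu (min tl 0) with ht
  have htu2 : tu ≤ t := le_max_left _ _
  have htl2 : t ≤ tl := max_le htltu (min_le_left _ _)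
  have hA : ∀ i, z i = y i - a i * t := by
    intro i
    rw [hz i, hzl i, hzu i]
    exact slab_med_aux (y i) (a i) tl tu htltu
  have hAz : ∑ i, a i * z i = s - t * S := by
    have h1 : ∀ i ∈ Finset.univ, a i * z i = a i * y i - a i ^ 2 * t := by
      intro i _; rw [hA i]; ring
    rw [Finset.sum_congr rfl h1, Finset.sum_sub_distrib, ← Finset.sum_mul, hs,
      mul_comm]
  -- feasibility
  have hfeas1 : bl ≤ ∑ i, a i * z i := by
    rw [hAz]
    have : t * S ≤ tl * S := mul_le_mul_of_nonneg_right htl2 hS.le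
    linarith
  have hfeas2 : ∑ i, a i * z i ≤ bu := by
    rw [hAz]
    have : tu * S ≤ t * S := mul_le_mul_of_nonneg_right htu2 hS.le
    linarith
  -- complementarity
  have hcomp : ∀ x : Fin n → ℝ, bl ≤ ∑ i, a i * x i → ∑ i, a i * x i ≤ bu →
      t * (∑ i, a i * x i - ∑ i, a i * z i) ≤ 0 := by
    intro x hx1 hx2
    rcases lt_trichotomy t 0 with h | h | h
    · have h0 : tl < 0 := by
        by_contra hh; push_neg at hh
        have h1 : min tl 0 = 0 := min_eq_right hh
        have h2 := le_max_right tu (min tl 0)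
        rw [h1] at h2; rw [ht, h1] at h; linarith
      have h1 : t = tl := by
        rw [ht, min_eq_left h0.le]; exact max_eq_right htltu
      have h2 : ∑ i, a i * z i = bl := by rw [hAz, h1]; linarith
      rw [h2]
      have : 0 ≤ ∑ i, a i * x i - bl := by linarith
      nlinarith
    · rw [h]; simp
    · have h1 : t = tu := by
        rcases max_cases tu (min tl 0) with ⟨h1, h2⟩ | ⟨h1, h2⟩
        · rw [ht]; exact h1
        · exfalso; rw [ht] at h; rw [h1] at h
          have := min_le_right tl (0:ℝ); linarith
      have h2 : ∑ i, a i * z i = bu := by rw [hAz, h1]; linarith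
      rw [h2]
      have : ∑ i, a i * x i - bu ≤ 0 := by linarith
      nlinarith
  -- expansion identity
  have hexp : ∀ x : Fin n → ℝ, ∑ i, (x i - y i) ^ 2 =
      ∑ i, (x i - z i) ^ 2
        - 2 * (t * (∑ i, a i * x i - ∑ i, a i * z i)) + ∑ i, (z i - y i) ^ 2 := by
    intro x
    have h1 : ∀ i ∈ Finset.univ, (x i - y i) ^ 2 =
        (x i - z i) ^ 2 - 2 * (t * (a i * x i - a i * z i)) + (z i - y i) ^ 2 := by
      intro i _
      have h := hA i
      rw [h]; ring
    rw [Finset.sum_congr rfl h1, Finset.sum_add_distrib, Finset.sum_sub_distrib,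
      ← Finset.mul_sum, ← Finset.mul_sum, Finset.sum_sub_distrib]
  have hnn : ∀ x : Fin n → ℝ, (0:ℝ) ≤ ∑ i, (x i - z i) ^ 2 :=
    fun x => Finset.sum_nonneg fun i _ => sq_nonneg _
  -- optimality
  have hopt : ∀ x : Fin n → ℝ, bl ≤ ∑ i, a i * x i → ∑ i, a i * x i ≤ bu →
      (1 / 2) * ∑ i, (z i - y i) ^ 2 ≤ (1 / 2) * ∑ i, (x i - y i) ^ 2 := by
    intro x hx1 hx2
    have hc := hcomp x hx1 hx2
    have he := hexp x
    have := hnn x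
    linarith
  refine ⟨⟨hfeas1, hfeas2⟩, hopt, ?_⟩
  -- uniqueness
  rintro x ⟨⟨hx1, hx2⟩, hmin⟩
  have h1 := hmin z hfeas1 hfeas2
  have h2 := hopt x hx1 hx2
  have he := hexp x
  have hc := hcomp x hx1 hx2
  have hzero : ∑ i, (x i - z i) ^ 2 = 0 := by
    have := hnn x; linarith
  funext i
  have h3 := (Finset.sum_eq_zero_iff_of_nonneg (fun i _ => sq_nonneg (x i - z i))).1
      hzero i (Finset.mem_univ i)
  have h4 : x i - z i = 0 := by
    nlinarith [sq_nonneg (x i - z i)]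
  linarith
end
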